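/- Let n ≥ 1, let Y be a C¹ vector field on ℝⁿ with compact support, let u be a C¹ real-valued function and v a C² real-valued function defined on a neighborhood of the support of Y. Then −2 ∫ v e^{2u} S(Y)(∇v, ∇v) ⟨∇v, Y⟩ dx = ∫ e^{2u} ⟨∇v, Y⟩ [ ⟨∇v, Y⟩ (|∇v|² + vΔv + 2v⟨∇v, ∇u⟩) + 2v · Hess v(Y, ∇v) ] dx. -/

import Mathlib

open MeasureTheory Real

/-- The `i`-th partial derivative of a function on `ℝⁿ`. -/
noncomputable def pd (n : ℕ) (f : EuclideanSpace ℝ (Fin n) → ℝ)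
    (i : Fin n) (x : EuclideanSpace ℝ (Fin n)) : ℝ :=
  fderiv ℝ f x (EuclideanSpace.single i 1)

/-- The squared Euclidean norm of the gradient, `|∇f|² = Σᵢ (∂ᵢf)²`. -/
noncomputable def gradSq (n : ℕ) (f : EuclideanSpace ℝ (Fin n) → ℝ)
    (x : EuclideanSpace ℝ (Fin n)) : ℝ :=
  ∑ i, (pd n f i x) ^ 2

/-- The Euclidean Laplacian, `Δf = Σᵢ ∂ᵢ²f`. -/
noncomputable def lap (n : ℕ) (f : EuclideanSpace ℝ (Fin n) → ℝ)
    (x : EuclideanSpace ℝ (Fin n)) : ℝ :=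
  ∑ i, pd n (pd n f i) i x

/-- The partial derivative `∂ᵢYⱼ` of a vector field `Y` on `ℝⁿ`. -/
noncomputable def vpd (n : ℕ)
    (Y : EuclideanSpace ℝ (Fin n) → EuclideanSpace ℝ (Fin n))
    (i j : Fin n) (x : EuclideanSpace ℝ (Fin n)) : ℝ :=
  fderiv ℝ (fun y => Y y j) x (EuclideanSpace.single i 1)

/-- The symmetrized gradient `S(Y)ᵢⱼ = (∂ᵢYⱼ + ∂ⱼYᵢ)/2` of a vector field. -/
noncomputable def symGrad (n : ℕ)
    (Y : EuclideanSpace ℝ (Fin n) → EuclideanSpace ℝ (Fin n))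
    (i j : Fin n) (x : EuclideanSpace ℝ (Fin n)) : ℝ :=
  (vpd n Y i j x + vpd n Y j i x) / 2

/-- The divergence `div Y = Σᵢ ∂ᵢYᵢ` of a vector field on `ℝⁿ`. -/
noncomputable def diverg (n : ℕ)
    (Y : EuclideanSpace ℝ (Fin n) → EuclideanSpace ℝ (Fin n))
    (x : EuclideanSpace ℝ (Fin n)) : ℝ :=
  ∑ i, vpd n Y i i x

/-- Integrability of a directional derivative of a compactly supported `C¹` function. -/
lemma swi_fderiv_integrable {n : ℕ} {f : EuclideanSpace ℝ (Fin n) → ℝ}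
    (hf : ContDiff ℝ 1 f) (hs : HasCompactSupport f) (w : EuclideanSpace ℝ (Fin n)) :
    Integrable (fun x => fderiv ℝ f x w) := by
  have hcont : Continuous (fun x => fderiv ℝ f x w) :=
    (ContinuousLinearMap.apply ℝ ℝ w).continuous.comp (hf.continuous_fderiv one_ne_zero)
  have hsup : HasCompactSupport (fun x => fderiv ℝ f x w) := by
    apply hs.mono'
    intro x hx
    have : fderiv ℝ f x ≠ 0 := by
      intro h; apply hx; simp [h]
    exact support_fderiv_subset ℝ this
  exact hcont.integrable_of_hasCompactSupport hsup

/-- The integral of a directional derivative of a compactly supported `C¹`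
function vanishes. -/
lemma swi_integral_fderiv_zero {n : ℕ} {f : EuclideanSpace ℝ (Fin n) → ℝ}
    (hf : ContDiff ℝ 1 f) (hs : HasCompactSupport f) (w : EuclideanSpace ℝ (Fin n)) :
    ∫ x, fderiv ℝ f x w = 0 := by
  have hfi : Integrable f := hf.continuous.integrable_of_hasCompactSupport hs
  have hfd : Integrable (fun x => fderiv ℝ f x w) := swi_fderiv_integrable hf hs w
  have h1 : (fun x : EuclideanSpace ℝ (Fin n) => fderiv ℝ (fun _ => (1:ℝ)) x w * f x)
      = fun _ => 0 := by
    ext x; simp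
  calc ∫ x, fderiv ℝ f x w = ∫ x, (1:ℝ) * fderiv ℝ f x w := by simp
    _ = - ∫ x, fderiv ℝ (fun _ => (1:ℝ)) x w * f x := by
        apply integral_mul_fderiv_eq_neg_fderiv_mul_of_integrable
        · rw [h1]; exact integrable_zero _ _ _
        · simpa using hfd
        · simpa using hfi
        · exact fun x _ => differentiableAt_const 1
        · exact fun x _ => hf.differentiable one_ne_zero x
    _ = 0 := by rw [h1]; simp

/-- Gluing a `C¹` function on an open set with `0` outside a closed subset. -/
lemma swi_glue_contDiff {n : ℕ} {Ω s : Set (EuclideanSpace ℝ (Fin n))} (hΩ : IsOpen Ω)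
    (hs : IsClosed s) (hsΩ : s ⊆ Ω) {f : EuclideanSpace ℝ (Fin n) → ℝ}
    (h1 : ContDiffOn ℝ 1 f Ω) (h0 : ∀ x ∉ s, f x = 0) : ContDiff ℝ 1 f := by
  apply contDiff_iff_contDiffAt.2
  intro x
  by_cases hx : x ∈ Ω
  · exact h1.contDiffAt (hΩ.mem_nhds hx)
  · have hxs : x ∉ s := fun h => hx (hsΩ h)
    have hev : f =ᶠ[nhds x] (fun _ => 0) := by
      filter_upwards [hs.isOpen_compl.mem_nhds hxs] with y hy using h0 y hy
    exact (contDiffAt_const (c := (0:ℝ))).congr_of_eventuallyEq hev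

/-- Gluing a continuous function on an open set with `0` outside a closed subset. -/
lemma swi_glue_continuous {n : ℕ} {Ω s : Set (EuclideanSpace ℝ (Fin n))} (hΩ : IsOpen Ω)
    (hs : IsClosed s) (hsΩ : s ⊆ Ω) {f : EuclideanSpace ℝ (Fin n) → ℝ}
    (h1 : ContinuousOn f Ω) (h0 : ∀ x ∉ s, f x = 0) : Continuous f := by
  apply continuous_iff_continuousAt.2
  intro x
  by_cases hx : x ∈ Ω
  · exact h1.continuousAt (hΩ.mem_nhds hx)
  · have hxs : x ∉ s := fun h => hx (hsΩ h)
    have hev : (fun _ => (0:ℝ)) =ᶠ[nhds x] f := by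
      filter_upwards [hs.isOpen_compl.mem_nhds hxs] with y hy using (h0 y hy).symm
    exact continuousAt_const.congr hev

/-- Flat-case second weighted identity for vector fields:
`−2∫ v e^{2u} S(Y)(∇v,∇v)⟨∇v,Y⟩ =
 ∫ e^{2u}⟨∇v,Y⟩[⟨∇v,Y⟩(|∇v|² + vΔv + 2v⟨∇v,∇u⟩) + 2v Hess v(Y,∇v)]`. -/
theorem second_weighted_identity (n : ℕ) (hn : 1 ≤ n)
    (Ω : Set (EuclideanSpace ℝ (Fin n))) (hΩ : IsOpen Ω)
    (Y : EuclideanSpace ℝ (Fin n) → EuclideanSpace ℝ (Fin n))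
    (u v : EuclideanSpace ℝ (Fin n) → ℝ)
    (hY : ContDiff ℝ 1 Y) (hsupp : HasCompactSupport Y) (hYΩ : tsupport Y ⊆ Ω)
    (hu : ContDiffOn ℝ 1 u Ω) (hv : ContDiffOn ℝ 2 v Ω) :
    -2 * ∫ x : EuclideanSpace ℝ (Fin n),
        v x * Real.exp (2 * u x) *
          (∑ i, ∑ j, symGrad n Y i j x * pd n v i x * pd n v j x) *
          (∑ i, pd n v i x * Y x i)
    = ∫ x : EuclideanSpace ℝ (Fin n),
        Real.exp (2 * u x) * (∑ i, pd n v i x * Y x i) *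
          ((∑ i, pd n v i x * Y x i) *
              (gradSq n v x + v x * lap n v x +
                2 * v x * (∑ i, pd n v i x * pd n u i x)) +
            2 * v x * (∑ i, ∑ j, Y x i * pd n (pd n v j) i x * pd n v j x)) := by
  classical
  -- abbreviations
  set A : EuclideanSpace ℝ (Fin n) → ℝ := fun x =>
    v x * Real.exp (2 * u x) *
      (∑ i, ∑ j, symGrad n Y i j x * pd n v i x * pd n v j x) *
      (∑ i, pd n v i x * Y x i) with hAdef
  set B : EuclideanSpace ℝ (Fin n) → ℝ := fun x =>
    Real.exp (2 * u x) * (∑ i, pd n v i x * Y x i) *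
      ((∑ i, pd n v i x * Y x i) *
          (gradSq n v x + v x * lap n v x +
            2 * v x * (∑ i, pd n v i x * pd n u i x)) +
        2 * v x * (∑ i, ∑ j, Y x i * pd n (pd n v j) i x * pd n v j x)) with hBdef
  set F : Fin n → EuclideanSpace ℝ (Fin n) → ℝ := fun i x =>
    v x * Real.exp (2 * u x) *
      ((∑ j, pd n v j x * Y x j) * (∑ j, pd n v j x * Y x j)) * pd n v i x with hFdef
  -- basic vanishing facts
  have hgY0 : ∀ x : EuclideanSpace ℝ (Fin n), Y x = 0 →
      (∑ j, pd n v j x * Y x j) = 0 := by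
    intro x h
    apply Finset.sum_eq_zero
    intro j _
    rw [h]
    simp
  have hgt0 : ∀ x ∉ tsupport Y, (∑ j, pd n v j x * Y x j) = 0 := fun x hx =>
    hgY0 x (image_eq_zero_of_notMem_tsupport hx)
  -- smoothness facts
  have hv1 : ContDiffOn ℝ 1 v Ω := hv.of_le one_le_two
  have hpv : ∀ j, ContDiffOn ℝ 1 (pd n v j) Ω := fun j =>
    (ContDiffOn.fderiv_of_isOpen (m := 1) hv hΩ (by norm_num)).clm_apply contDiffOn_const
  have hppvc : ∀ i j, ContinuousOn (pd n (pd n v j) i) Ω := by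
    intro i j
    exact ((ContDiffOn.fderiv_of_isOpen (m := 0) (hpv j) hΩ (by norm_num)).clm_apply
      contDiffOn_const).continuousOn
  have hpuc : ∀ i, ContinuousOn (pd n u i) Ω := by
    intro i
    exact ((ContDiffOn.fderiv_of_isOpen (m := 0) hu hΩ (by norm_num)).clm_apply
      contDiffOn_const).continuousOn
  have hYj : ∀ j, ContDiff ℝ 1 (fun x => Y x j) := fun j =>
    (EuclideanSpace.proj j : EuclideanSpace ℝ (Fin n) →L[ℝ] ℝ).contDiff.comp hY
  have hvpdc : ∀ i j, Continuous (vpd n Y i j) := fun i j =>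
    (ContinuousLinearMap.apply ℝ ℝ (EuclideanSpace.single i 1)).continuous.comp
      ((hYj j).continuous_fderiv one_ne_zero)
  have hexpΩ : ContDiffOn ℝ 1 (fun x => Real.exp (2 * u x)) Ω :=
    Real.contDiff_exp.comp_contDiffOn (contDiffOn_const.mul hu)
  have hgΩ : ContDiffOn ℝ 1 (fun x => ∑ j, pd n v j x * Y x j) Ω :=
    ContDiffOn.sum fun j _ => (hpv j).mul (hYj j).contDiffOn
  -- the auxiliary vector field is C¹ with compact support
  have hF1 : ∀ i, ContDiff ℝ 1 (F i) := by
    intro i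
    apply swi_glue_contDiff hΩ (isClosed_tsupport Y) hYΩ
    · exact ((hv1.mul hexpΩ).mul (hgΩ.mul hgΩ)).mul (hpv i)
    · intro x hx
      simp only [hFdef]
      rw [hgt0 x hx]
      ring
  have hFs : ∀ i, HasCompactSupport (F i) := by
    intro i
    apply hsupp.mono
    intro x hx
    simp only [Function.mem_support] at hx ⊢
    intro h
    apply hx
    simp only [hFdef]
    rw [hgY0 x h]
    ring
  -- the divergence integrates to zero
  have hzero : ∫ x, ∑ i, fderiv ℝ (F i) x (EuclideanSpace.single i 1) = 0 := by
    rw [integral_finset_sum _ (fun i _ => swi_fderiv_integrable (hF1 i) (hFs i) _)]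
    exact Finset.sum_eq_zero fun i _ => swi_integral_fderiv_zero (hF1 i) (hFs i) _
  -- pointwise identity: divergence = B + 2A
  have hpt : ∀ x, ∑ i, fderiv ℝ (F i) x (EuclideanSpace.single i 1) = B x + 2 * A x := by
    intro x
    by_cases hx : x ∈ Ω
    · -- main computation
      have hmem := hΩ.mem_nhds hx
      have hdv : HasFDerivAt v (fderiv ℝ v x) x :=
        ((hv.contDiffAt hmem).differentiableAt two_ne_zero).hasFDerivAt
      have hdu : HasFDerivAt u (fderiv ℝ u x) x :=
        ((hu.contDiffAt hmem).differentiableAt one_ne_zero).hasFDerivAt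
      have hdpv : ∀ j, HasFDerivAt (pd n v j) (fderiv ℝ (pd n v j) x) x := fun j =>
        (((hpv j).contDiffAt hmem).differentiableAt one_ne_zero).hasFDerivAt
      have hdY : ∀ j, HasFDerivAt (fun y => Y y j) (fderiv ℝ (fun y => Y y j) x) x :=
        fun j => (((hYj j).differentiable one_ne_zero) x).hasFDerivAt
      have hdg : HasFDerivAt (fun y => ∑ j, pd n v j y * Y y j)
          (∑ j, (pd n v j x • fderiv ℝ (fun y => Y y j) x
            + Y x j • fderiv ℝ (pd n v j) x)) x :=
        HasFDerivAt.fun_sum (fun j _ => (hdpv j).fun_mul (hdY j))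
      have hexp : HasFDerivAt (fun y => Real.exp (2 * u y))
          (Real.exp (2 * u x) • ((2:ℝ) • fderiv ℝ u x)) x := (hdu.const_mul 2).exp
      -- the coordinate derivative of each `F i`
      have hDF : ∀ i, fderiv ℝ (F i) x (EuclideanSpace.single i 1)
          = (Real.exp (2 * u x) *
                ((∑ j, pd n v j x * Y x j) * (∑ j, pd n v j x * Y x j)))
              * (pd n v i x * pd n v i x)
            + (2 * v x * Real.exp (2 * u x) *
                ((∑ j, pd n v j x * Y x j) * (∑ j, pd n v j x * Y x j)))
              * (pd n v i x * pd n u i x)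
            + (v x * Real.exp (2 * u x) *
                ((∑ j, pd n v j x * Y x j) * (∑ j, pd n v j x * Y x j)))
              * pd n (pd n v i) i x
            + (2 * v x * Real.exp (2 * u x) * (∑ j, pd n v j x * Y x j)) *
                ((∑ j, (pd n v j x * vpd n Y i j x + Y x j * pd n (pd n v j) i x))
                  * pd n v i x) := by
        intro i
        have hdF := (((hdv.fun_mul hexp).fun_mul (hdg.fun_mul hdg)).fun_mul (hdpv i))
        simp only [hFdef]
        rw [hdF.fderiv]
        simp only [ContinuousLinearMap.add_apply, ContinuousLinearMap.smul_apply,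
          ContinuousLinearMap.coe_sum', Finset.sum_apply, smul_eq_mul, pd, vpd]
        ring
      -- Schwarz symmetry of second derivatives
      have hsy : ∀ i j, pd n (pd n v j) i x = pd n (pd n v i) j x := by
        intro i j
        have hvx : ContDiffAt ℝ 2 v x := hv.contDiffAt hmem
        have hsymm := hvx.isSymmSndFDerivAt (by norm_num [minSmoothness_of_isRCLikeNormedField])
        have hdd : DifferentiableAt ℝ (fderiv ℝ v) x :=
          (hvx.fderiv_right (m := 1) (by norm_num)).differentiableAt one_ne_zero
        have key : ∀ a b : Fin n,
            fderiv ℝ (fun y => fderiv ℝ v y (EuclideanSpace.single b 1)) x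
              (EuclideanSpace.single a 1)
            = fderiv ℝ (fderiv ℝ v) x (EuclideanSpace.single a 1)
                (EuclideanSpace.single b 1) := by
          intro a b
          rw [fderiv_clm_apply hdd (differentiableAt_const _)]
          simp
        have e1 : pd n v j = fun y => fderiv ℝ v y (EuclideanSpace.single j 1) := rfl
        have e2 : pd n v i = fun y => fderiv ℝ v y (EuclideanSpace.single i 1) := rfl
        show fderiv ℝ (pd n v j) x (EuclideanSpace.single i 1)
            = fderiv ℝ (pd n v i) x (EuclideanSpace.single j 1)
        rw [e1, e2, key, key, hsymm]
      -- the mixed sum identity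
      have hTH : ∑ i, (((∑ j, pd n v j x * vpd n Y i j x)
              + (∑ j, Y x j * pd n (pd n v j) i x)) * pd n v i x)
          = (∑ i, ∑ j, symGrad n Y i j x * pd n v i x * pd n v j x)
            + (∑ i, ∑ j, Y x i * pd n (pd n v j) i x * pd n v j x) := by
        have split : ∑ i, (((∑ j, pd n v j x * vpd n Y i j x)
              + (∑ j, Y x j * pd n (pd n v j) i x)) * pd n v i x)
            = (∑ i, ∑ j, pd n v j x * vpd n Y i j x * pd n v i x)
              + (∑ i, ∑ j, Y x j * pd n (pd n v j) i x * pd n v i x) := by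
          simp only [Finset.sum_mul, add_mul, Finset.sum_add_distrib]
        rw [split]
        congr 1
        · -- symmetrized-gradient part
          have hc : ∑ i, ∑ j, pd n v i x * pd n v j x * vpd n Y j i x
              = ∑ i, ∑ j, pd n v i x * pd n v j x * vpd n Y i j x := by
            rw [Finset.sum_comm]
            exact Finset.sum_congr rfl fun i _ => Finset.sum_congr rfl fun j _ => by ring
          have h1 : ∑ i, ∑ j, pd n v j x * vpd n Y i j x * pd n v i x
              = ∑ i, ∑ j, pd n v i x * pd n v j x * vpd n Y i j x := by
            exact Finset.sum_congr rfl fun i _ => Finset.sum_congr rfl fun j _ => by ring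
          have h2 : ∑ i, ∑ j, symGrad n Y i j x * pd n v i x * pd n v j x
              = (∑ i, ∑ j, pd n v i x * pd n v j x * vpd n Y i j x) / 2
                + (∑ i, ∑ j, pd n v i x * pd n v j x * vpd n Y j i x) / 2 := by
            simp only [symGrad, Finset.sum_div, ← Finset.sum_add_distrib]
            exact Finset.sum_congr rfl fun i _ => Finset.sum_congr rfl fun j _ => by ring
          rw [h1, h2, hc]
          ring
        · -- Hessian part, using Schwarz symmetry
          rw [Finset.sum_comm]
          exact Finset.sum_congr rfl fun i _ => Finset.sum_congr rfl fun j _ => by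
            rw [hsy j i]
      -- assemble
      have hgs : gradSq n v x = ∑ i, pd n v i x * pd n v i x := by
        simp [gradSq, sq]
      have hlap : lap n v x = ∑ i, pd n (pd n v i) i x := rfl
      rw [Finset.sum_congr rfl (fun i _ => hDF i)]
      simp only [Finset.sum_add_distrib, ← Finset.mul_sum]
      rw [hTH, hAdef, hBdef]
      simp only [hgs, hlap]
      ring
    · -- off the support of Y everything vanishes
      have hxs : x ∉ tsupport Y := fun h => hx (hYΩ h)
      have hfz : ∀ i, fderiv ℝ (F i) x (EuclideanSpace.single i 1) = 0 := by
        intro i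
        have hev : F i =ᶠ[nhds x] (fun _ => 0) := by
          filter_upwards [(isClosed_tsupport Y).isOpen_compl.mem_nhds hxs] with y hy
          simp only [hFdef]
          rw [hgt0 y hy]
          ring
        rw [hev.fderiv_eq]
        simp
      rw [hAdef, hBdef]
      simp only [hfz, hgt0 x hxs]
      simp
  -- integrability of the two integrands
  have hAcont : Continuous A := by
    apply swi_glue_continuous hΩ (isClosed_tsupport Y) hYΩ
    · apply ContinuousOn.mul
      apply ContinuousOn.mul
      apply ContinuousOn.mul (hv1.continuousOn) (hexpΩ.continuousOn)
      · apply continuousOn_finset_sum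
        intro i _
        apply continuousOn_finset_sum
        intro j _
        exact ((((hvpdc i j).add (hvpdc j i)).div_const 2).continuousOn.mul
          ((hpv i).continuousOn)).mul ((hpv j).continuousOn)
      · exact hgΩ.continuousOn
    · intro x hx
      rw [hAdef]
      simp only
      rw [hgt0 x hx]
      ring
  have hBcont : Continuous B := by
    apply swi_glue_continuous hΩ (isClosed_tsupport Y) hYΩ
    · apply ContinuousOn.mul
      · exact (hexpΩ.continuousOn).mul (hgΩ.continuousOn)
      · apply ContinuousOn.add
        · apply ContinuousOn.mul (hgΩ.continuousOn)
          apply ContinuousOn.add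
          apply ContinuousOn.add
          · exact continuousOn_finset_sum _ fun i _ => ((hpv i).continuousOn).pow 2
          · exact hv1.continuousOn.mul
              (continuousOn_finset_sum _ fun i _ => hppvc i i)
          · exact (continuousOn_const.mul hv1.continuousOn).mul
              (continuousOn_finset_sum _ fun i _ =>
                ((hpv i).continuousOn).mul (hpuc i))
        · apply ContinuousOn.mul (continuousOn_const.mul hv1.continuousOn)
          apply continuousOn_finset_sum
          intro i _
          apply continuousOn_finset_sum
          intro j _
          exact (((hYj i).continuous.continuousOn).mul (hppvc i j)).mul
            ((hpv j).continuousOn)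
    · intro x hx
      rw [hBdef]
      simp only
      rw [hgt0 x hx]
      ring
  have hAsupp : HasCompactSupport A := by
    apply hsupp.mono
    intro x hx
    simp only [Function.mem_support] at hx ⊢
    intro h
    apply hx
    rw [hAdef]
    simp only
    rw [hgY0 x h]
    ring
  have hBsupp : HasCompactSupport B := by
    apply hsupp.mono
    intro x hx
    simp only [Function.mem_support] at hx ⊢
    intro h
    apply hx
    rw [hBdef]
    simp only
    rw [hgY0 x h]
    ring
  have hAint : Integrable A := hAcont.integrable_of_hasCompactSupport hAsupp
  have hBint : Integrable B := hBcont.integrable_of_hasCompactSupport hBsupp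
  -- conclude
  have hsum : ∫ x, (B x + 2 * A x) = 0 := by
    rw [← hzero]
    exact integral_congr_ae (Filter.Eventually.of_forall fun x => (hpt x).symm)
  rw [integral_add hBint (hAint.const_mul 2), integral_const_mul] at hsum
  linarith
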